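/- Let S be a nonempty finite set and n a natural number. Let p and q be probability mass functions on the finite type Fin n → S. Then there exists a probability mass function r on (Fin n → S) × (Fin n → S) whose first marginal is p and whose second marginal is q, such that r({(x, y) : x ≠ y}) ≤ |S|^n · max_{α : Fin n → S} |p(α) − q(α)|. Consequently, for each coordinate i, r({(x, y) : x(i) ≠ y(i)}) ≤ |S|^n · max_α |p(α) − q(α)|. -/

import Mathlib

open scoped BigOperators ENNReal

/-- Coupling lemma with a total-variation bound expressed via the sup-distance:
any two pmfs `p q` on `Fin n → S` admit a coupling `r` whose marginals are `p` and `q`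
and in which the probability of disagreement is at most `|S|^n` times the maximum
pointwise difference of `p` and `q`; a fortiori the same bound holds coordinatewise. -/
theorem coupling_sup_distance_bound
    {S : Type*} [Fintype S] [Nonempty S] [DecidableEq S] (n : ℕ)
    (p q : PMF (Fin n → S)) :
    ∃ r : PMF ((Fin n → S) × (Fin n → S)),
      (∀ x : Fin n → S, ∑ y : Fin n → S, r (x, y) = p x) ∧
      (∀ y : Fin n → S, ∑ x : Fin n → S, r (x, y) = q y) ∧
      ((∑ x : Fin n → S, ∑ y : Fin n → S,
          (if x ≠ y then (r (x, y)).toReal else 0))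
        ≤ (Fintype.card S : ℝ) ^ n *
            Finset.univ.sup' Finset.univ_nonempty
              (fun α : Fin n → S => |(p α).toReal - (q α).toReal|)) ∧
      (∀ i : Fin n,
        (∑ x : Fin n → S, ∑ y : Fin n → S,
            (if x i ≠ y i then (r (x, y)).toReal else 0))
          ≤ (Fintype.card S : ℝ) ^ n *
              Finset.univ.sup' Finset.univ_nonempty
                (fun α : Fin n → S => |(p α).toReal - (q α).toReal|)) := by
  classical
  set m : (Fin n → S) → ℝ≥0∞ := fun x => min (p x) (q x) with hm
  have hmp : ∀ x, m x ≤ p x := fun x => min_le_left _ _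
  have hmq : ∀ x, m x ≤ q x := fun x => min_le_right _ _
  have hsump : ∑ x : Fin n → S, p x = 1 := by
    rw [← p.tsum_coe, tsum_fintype]
  have hsumq : ∑ x : Fin n → S, q x = 1 := by
    rw [← q.tsum_coe, tsum_fintype]
  have hsumm_le : ∑ x : Fin n → S, m x ≤ 1 := by
    rw [← hsump]; exact Finset.sum_le_sum fun x _ => hmp x
  have hsumm_ne_top : ∑ x : Fin n → S, m x ≠ ∞ := ne_top_of_le_ne_top ENNReal.one_ne_top hsumm_le
  set Z : ℝ≥0∞ := 1 - ∑ x : Fin n → S, m x with hZdef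
  have hZ_ne_top : Z ≠ ∞ :=
    ne_top_of_le_ne_top ENNReal.one_ne_top tsub_le_self
  -- sums of differences
  have hsub : ∀ (f : (Fin n → S) → ℝ≥0∞), (∀ x, m x ≤ f x) → (∑ x : Fin n → S, f x = 1) →
      ∑ x : Fin n → S, (f x - m x) = Z := by
    intro f hle hsf
    have : ∑ x : Fin n → S, (f x - m x) + ∑ x : Fin n → S, m x = ∑ x : Fin n → S, f x := by
      rw [← Finset.sum_add_distrib]
      exact Finset.sum_congr rfl fun x _ => tsub_add_cancel_of_le (hle x)
    rw [hsf] at this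
    exact ENNReal.eq_sub_of_add_eq hsumm_ne_top this
  have hsubp : ∑ x : Fin n → S, (p x - m x) = Z := hsub _ hmp hsump
  have hsubq : ∑ x : Fin n → S, (q x - m x) = Z := hsub _ hmq hsumq
  have hzero : ∀ (f : (Fin n → S) → ℝ≥0∞), (∑ x : Fin n → S, (f x - m x) = Z) → Z = 0 →
      ∀ x, f x - m x = 0 := by
    intro f hsf hZ0 x
    exact (Finset.sum_eq_zero_iff.mp (hsf.trans hZ0)) x (Finset.mem_univ x)
  have hdivsum : ∀ (g : (Fin n → S) → ℝ≥0∞),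
      ∑ y : Fin n → S, g y / Z = (∑ y : Fin n → S, g y) / Z := by
    intro g
    simp only [div_eq_mul_inv, ← Finset.sum_mul]
  set r0 : (Fin n → S) × (Fin n → S) → ℝ≥0∞ :=
    fun z => (if z.1 = z.2 then m z.1 else 0) + (p z.1 - m z.1) * (q z.2 - m z.2) / Z with hr0
  have hrow : ∀ x : Fin n → S, ∑ y : Fin n → S, r0 (x, y) = p x := by
    intro x
    have h1 : ∑ y : Fin n → S, r0 (x, y)
        = m x + (p x - m x) * (Z / Z) := by
      simp only [hr0]
      rw [Finset.sum_add_distrib, Finset.sum_ite_eq (Finset.univ : Finset (Fin n → S)) x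
        (fun _ => m x)]
      simp only [Finset.mem_univ, if_true]
      congr 1
      calc ∑ y : Fin n → S, (p x - m x) * (q y - m y) / Z
          = ∑ y : Fin n → S, (p x - m x) * ((q y - m y) / Z) :=
            Finset.sum_congr rfl fun y _ => mul_div_assoc _ _ _
        _ = (p x - m x) * ∑ y : Fin n → S, ((q y - m y) / Z) := by rw [Finset.mul_sum]
        _ = (p x - m x) * (Z / Z) := by rw [hdivsum, hsubq]
    rw [h1]
    rcases eq_or_ne Z 0 with hZ0 | hZ0
    · have h2 : p x - m x = 0 := hzero _ hsubp hZ0 x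
      have h3 : p x ≤ m x := tsub_eq_zero_iff_le.mp h2
      rw [h2]
      simp [le_antisymm h3 (hmp x)]
    · rw [ENNReal.div_self hZ0 hZ_ne_top, mul_one]
      exact add_tsub_cancel_of_le (hmp x)
  have hcol : ∀ y : Fin n → S, ∑ x : Fin n → S, r0 (x, y) = q y := by
    intro y
    have h1 : ∑ x : Fin n → S, r0 (x, y)
        = m y + (q y - m y) * (Z / Z) := by
      simp only [hr0]
      rw [Finset.sum_add_distrib]
      congr 1
      · rw [Finset.sum_ite_eq' (Finset.univ : Finset (Fin n → S)) y m]
        simp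
      · calc ∑ x : Fin n → S, (p x - m x) * (q y - m y) / Z
            = ∑ x : Fin n → S, (q y - m y) * ((p x - m x) / Z) := by
              refine Finset.sum_congr rfl fun x _ => ?_
              rw [mul_comm (p x - m x) (q y - m y), mul_div_assoc]
          _ = (q y - m y) * ∑ x : Fin n → S, ((p x - m x) / Z) := by rw [Finset.mul_sum]
          _ = (q y - m y) * (Z / Z) := by rw [hdivsum, hsubp]
    rw [h1]
    rcases eq_or_ne Z 0 with hZ0 | hZ0
    · have h2 : q y - m y = 0 := hzero _ hsubq hZ0 y
      have h3 : q y ≤ m y := tsub_eq_zero_iff_le.mp h2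
      rw [h2]
      simp [le_antisymm h3 (hmq y)]
    · rw [ENNReal.div_self hZ0 hZ_ne_top, mul_one]
      exact add_tsub_cancel_of_le (hmq y)
  have htotal : ∑ z : (Fin n → S) × (Fin n → S), r0 z = 1 := by
    rw [Fintype.sum_prod_type]
    calc ∑ x : Fin n → S, ∑ y : Fin n → S, r0 (x, y) = ∑ x : Fin n → S, p x :=
          Finset.sum_congr rfl fun x _ => hrow x
      _ = 1 := hsump
  refine ⟨PMF.ofFintype r0 htotal, hrow, hcol, ?_⟩
  have happ : ∀ z : (Fin n → S) × (Fin n → S), (PMF.ofFintype r0 htotal) z = r0 z := fun _ => rfl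
  set M : ℝ := Finset.univ.sup' Finset.univ_nonempty
      (fun α : Fin n → S => |(p α).toReal - (q α).toReal|) with hM
  have hr0_ne_top : ∀ z : (Fin n → S) × (Fin n → S), r0 z ≠ ∞ := by
    intro z
    have := (PMF.ofFintype r0 htotal).apply_ne_top z
    rwa [happ] at this
  -- disagreement bound in ℝ≥0∞
  have hboundE : ∑ x : Fin n → S, ∑ y : Fin n → S, (if x ≠ y then r0 (x, y) else 0) ≤ Z := by
    have hle : ∀ x y : Fin n → S, (if x ≠ y then r0 (x, y) else 0)
        ≤ (p x - m x) * (q y - m y) / Z := by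
      intro x y
      by_cases h : x = y
      · simp only [h, ne_eq, not_true_eq_false, if_false]
        exact zero_le
      · simp [hr0, h]
    calc ∑ x : Fin n → S, ∑ y : Fin n → S, (if x ≠ y then r0 (x, y) else 0)
        ≤ ∑ x : Fin n → S, ∑ y : Fin n → S, (p x - m x) * (q y - m y) / Z :=
          Finset.sum_le_sum fun x _ => Finset.sum_le_sum fun y _ => hle x y
      _ = Z * (Z / Z) := by
          calc ∑ x : Fin n → S, ∑ y : Fin n → S, (p x - m x) * (q y - m y) / Z
              = ∑ x : Fin n → S, (p x - m x) * (Z / Z) := by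
                refine Finset.sum_congr rfl fun x _ => ?_
                calc ∑ y : Fin n → S, (p x - m x) * (q y - m y) / Z
                    = ∑ y : Fin n → S, (p x - m x) * ((q y - m y) / Z) :=
                      Finset.sum_congr rfl fun y _ => mul_div_assoc _ _ _
                  _ = (p x - m x) * ∑ y : Fin n → S, ((q y - m y) / Z) := by
                      rw [Finset.mul_sum]
                  _ = (p x - m x) * (Z / Z) := by rw [hdivsum, hsubq]
            _ = (∑ x : Fin n → S, (p x - m x)) * (Z / Z) := by rw [Finset.sum_mul]
            _ = Z * (Z / Z) := by rw [hsubp]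
      _ ≤ Z * 1 := mul_le_mul_of_nonneg_left ENNReal.div_self_le_one zero_le
      _ = Z := mul_one Z
  -- real bound on Z
  have hterm : ∀ x : Fin n → S, (p x - m x).toReal ≤ |(p x).toReal - (q x).toReal| := by
    intro x
    rcases le_total (p x) (q x) with h | h
    · have h0 : p x - m x = 0 := by simp [hm, min_eq_left h]
      rw [h0]
      simp
    · have hmx : m x = q x := min_eq_right h
      rw [hmx, ENNReal.toReal_sub_of_le h (p.apply_ne_top x)]
      exact le_abs_self _
  have hZtoReal : Z.toReal ≤ (Fintype.card S : ℝ) ^ n * M := by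
    have h1 : Z.toReal = ∑ x : Fin n → S, (p x - m x).toReal := by
      rw [← hsubp, ENNReal.toReal_sum]
      intro x _
      exact ne_top_of_le_ne_top (p.apply_ne_top x) tsub_le_self
    rw [h1]
    calc ∑ x : Fin n → S, (p x - m x).toReal
        ≤ ∑ _x : Fin n → S, M := by
          refine Finset.sum_le_sum fun x _ => (hterm x).trans ?_
          rw [hM]
          exact Finset.le_sup' (fun α : Fin n → S => |(p α).toReal - (q α).toReal|)
            (Finset.mem_univ x)
      _ = (Fintype.card (Fin n → S) : ℝ) * M := by
          rw [Finset.sum_const, Finset.card_univ, nsmul_eq_mul]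
      _ = (Fintype.card S : ℝ) ^ n * M := by
          rw [Fintype.card_fun, Fintype.card_fin]
          push_cast
          ring
  have hmain : (∑ x : Fin n → S, ∑ y : Fin n → S,
      (if x ≠ y then ((PMF.ofFintype r0 htotal) (x, y)).toReal else 0))
      ≤ (Fintype.card S : ℝ) ^ n * M := by
    have heq : (∑ x : Fin n → S, ∑ y : Fin n → S,
        (if x ≠ y then ((PMF.ofFintype r0 htotal) (x, y)).toReal else 0))
        = (∑ x : Fin n → S, ∑ y : Fin n → S, (if x ≠ y then r0 (x, y) else 0)).toReal := by
      rw [ENNReal.toReal_sum]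
      · refine Finset.sum_congr rfl fun x _ => ?_
        rw [ENNReal.toReal_sum]
        · refine Finset.sum_congr rfl fun y _ => ?_
          rw [happ]
          split <;> simp
        · intro y _
          split
          · exact hr0_ne_top (x, y)
          · simp
      · intro x _
        refine ne_of_lt (ENNReal.sum_lt_top.mpr fun y _ => ?_)
        split
        · exact (hr0_ne_top (x, y)).lt_top
        · simp
    rw [heq]
    calc (∑ x : Fin n → S, ∑ y : Fin n → S, (if x ≠ y then r0 (x, y) else 0)).toReal
        ≤ Z.toReal := ENNReal.toReal_mono hZ_ne_top hboundE
      _ ≤ _ := hZtoReal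
  refine ⟨hmain, fun i => ?_⟩
  refine le_trans ?_ hmain
  refine Finset.sum_le_sum fun x _ => Finset.sum_le_sum fun y _ => ?_
  by_cases h : x i = y i
  · simp only [ne_eq, h, not_true_eq_false, if_false]
    split
    · exact ENNReal.toReal_nonneg
    · exact le_rfl
  · have hxy : x ≠ y := fun hxy => h (by rw [hxy])
    simp only [ne_eq, h, not_false_eq_true, if_true, hxy, if_true]
    exact le_rfl
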